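/- Let Ω be a bounded domain with compactification Ω̄¹ and let f : Ω̄¹ → ℝ̄ be upper semicontinuous. Then lW(f|_Ω) ≤ lP_{Ω¹}(f|_{∂¹Ω}) and lZ(f|_Ω) ≤ lS_{Ω¹}(f|_{∂¹Ω}). If moreover f < ∞ on ∂¹Ω, then also uW(f|_Ω) ≤ uP_{Ω¹}(f|_{∂¹Ω}) and uZ(f|_Ω) ≤ uS_{Ω¹}(f|_{∂¹Ω}). -/

import Mathlib

open Filter Set

/-- The filter of approach to a point `x` of the compactification from within `Ω`. -/
def approach {X : Type*} [TopologicalSpace X] (Ω : Set X) (x : X) : Filter ↥Ω :=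
  Filter.comap (Subtype.val : ↥Ω → X) (nhds x)

/-- An extended-real-valued function bounded from below by a real constant. -/
def BddBelowE {α : Type*} (u : α → EReal) : Prop :=
  ∃ m : ℝ, ∀ y, (m : EReal) ≤ u y

/-- The upper (Perron) class of a boundary function `f : ∂¹Ω → ℝ̄`. -/
def upperPerronClass {X : Type*} [TopologicalSpace X] (Ω : Set X)
    (SH : (↥Ω → EReal) → Prop) (f : {x : X // x ∉ Ω} → EReal) :
    Set (↥Ω → EReal) :=
  {u | SH u ∧ BddBelowE u ∧
    ∀ x : {x : X // x ∉ Ω}, f x ≤ liminf u (approach Ω (x : X))}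

/-- The upper Perron solution `uP_{Ω¹} f`. -/
noncomputable def uP {X : Type*} [TopologicalSpace X] (Ω : Set X)
    (SH : (↥Ω → EReal) → Prop) (f : {x : X // x ∉ Ω} → EReal) : ↥Ω → EReal :=
  fun z => ⨅ u ∈ upperPerronClass Ω SH f, u z

/-- The lower Perron solution `lP_{Ω¹} f := -uP_{Ω¹}(-f)`. -/
noncomputable def lP {X : Type*} [TopologicalSpace X] (Ω : Set X)
    (SH : (↥Ω → EReal) → Prop) (f : {x : X // x ∉ Ω} → EReal) : ↥Ω → EReal :=
  fun z => - uP Ω SH (fun x => - f x) z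

/-- The upper Wiener class `U^W_f` of `f : Ω → ℝ̄`. -/
def upperWienerClass {X : Type*} [TopologicalSpace X] (Ω : Set X)
    (SH : (↥Ω → EReal) → Prop) (f : ↥Ω → EReal) : Set (↥Ω → EReal) :=
  {u | SH u ∧ BddBelowE u ∧
    ∃ K : Set X, IsCompact K ∧ K ⊆ Ω ∧ ∀ y : ↥Ω, (y : X) ∉ K → f y ≤ u y}

/-- The upper Wiener solution `uW f`. -/
noncomputable def uW {X : Type*} [TopologicalSpace X] (Ω : Set X)
    (SH : (↥Ω → EReal) → Prop) (f : ↥Ω → EReal) : ↥Ω → EReal :=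
  fun z => ⨅ u ∈ upperWienerClass Ω SH f, u z

/-- The lower Wiener solution `lW f := -uW(-f)`. -/
noncomputable def lW {X : Type*} [TopologicalSpace X] (Ω : Set X)
    (SH : (↥Ω → EReal) → Prop) (f : ↥Ω → EReal) : ↥Ω → EReal :=
  fun z => - uW Ω SH (fun y => - f y) z

lemma my_le_of_forall_add_eps {a b : EReal} (h : ∀ ε : ℝ, 0 < ε → a ≤ b + ε) : a ≤ b := by
  induction b using EReal.rec with
  | bot => simpa using h 1 one_pos
  | top => exact le_top
  | coe s =>
      by_contra hc
      obtain ⟨r, hsr, hra⟩ := EReal.exists_between_coe_real (not_le.1 hc)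
      have hsr' : s < r := by exact_mod_cast hsr
      have := h (r - s) (by linarith)
      rw [show ((s : EReal) + (r - s : ℝ)) = (r : EReal) by norm_cast; ring] at this
      exact absurd (hra.trans_le this) (lt_irrefl _)
lemma my_wiener_subset_perron {X : Type*} [TopologicalSpace X] [T2Space X] (Ω : Set X)
    (SH : (↥Ω → EReal) → Prop) (g : X → EReal) (hlsc : LowerSemicontinuous g) :
    upperWienerClass Ω SH (fun y : ↥Ω => g y) ⊆
      upperPerronClass Ω SH (fun x : {x : X // x ∉ Ω} => g x) := by
  rintro u ⟨hsh, hbb, K, hKc, hKΩ, hout⟩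
  refine ⟨hsh, hbb, fun x => ?_⟩
  have hmem : Kᶜ ∈ nhds (x : X) :=
    hKc.isClosed.isOpen_compl.mem_nhds fun hx => x.2 (hKΩ hx)
  have hev : ∀ᶠ y : ↥Ω in approach Ω (x : X), g (y : X) ≤ u y := by
    filter_upwards [Filter.preimage_mem_comap hmem] with y hy using hout y hy
  have h1 : g (x : X) ≤ liminf (fun y : ↥Ω => g (y : X)) (approach Ω (x : X)) := by
    refine (Filter.le_liminf_iff (by isBoundedDefault) (by isBoundedDefault)).2 fun b hb => ?_
    exact (hlsc (x : X) b hb).comap (Subtype.val : ↥Ω → X)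
  exact h1.trans (Filter.liminf_le_liminf hev)
lemma my_perron_add_mem_wiener {X : Type*} [TopologicalSpace X] [CompactSpace X] [T2Space X]
    (Ω : Set X) (hopen : IsOpen Ω)
    (SH : (↥Ω → EReal) → Prop)
    (hshift : ∀ (u : ↥Ω → EReal) (c : ℝ), SH u → SH (fun y => u y + (c : EReal)))
    (f : X → EReal) (husc : UpperSemicontinuous f) (hfin : ∀ x : X, x ∉ Ω → f x ≠ ⊤)
    (u : ↥Ω → EReal) (hu : u ∈ upperPerronClass Ω SH (fun x : {x : X // x ∉ Ω} => f x))
    (ε : ℝ) (hε : 0 < ε) :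
    (fun y => u y + (ε : EReal)) ∈ upperWienerClass Ω SH (fun y : ↥Ω => f y) := by
  obtain ⟨hsh, ⟨m, hm⟩, hbd⟩ := hu
  refine ⟨hshift u ε hsh, ⟨m, fun y => (hm y).trans (le_add_of_nonneg_right (by exact_mod_cast hε.le))⟩, ?_⟩
  -- for each boundary point find an open neighbourhood on which f ≤ u + ε
  have key : ∀ x : X, x ∉ Ω → ∃ V : Set X, IsOpen V ∧ x ∈ V ∧
      ∀ y ∈ V, ∀ a : ↥Ω, (a : X) = y → f (a : X) ≤ u a + (ε : EReal) := by
    intro x hx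
    set L := liminf u (approach Ω x) with hL
    have hLf : f x ≤ L := hbd ⟨x, hx⟩
    have hfx : f x < ⊤ := lt_top_iff_ne_top.2 (hfin x hx)
    have hmL : (m : EReal) ≤ L :=
      Filter.le_liminf_of_le (by isBoundedDefault) (Filter.Eventually.of_forall fun y => hm y)
    -- choose a real t with f x < t and (t - ε) < L
    obtain ⟨t, hft, htL⟩ : ∃ t : ℝ, f x < (t : EReal) ∧ ((t - ε : ℝ) : EReal) < L := by
      by_cases hLtop : L = ⊤
      · obtain ⟨t, h1, _⟩ := EReal.exists_between_coe_real hfx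
        exact ⟨t, h1, by rw [hLtop]; exact EReal.coe_lt_top _⟩
      · lift L to ℝ using ⟨hLtop, fun hbot => by simp [hbot] at hmL⟩ with l hl
        have : f x < ((l + ε : ℝ) : EReal) := hLf.trans_lt (by exact_mod_cast (by linarith : l < l + ε))
        obtain ⟨t, h1, h2⟩ := EReal.exists_between_coe_real this
        have h2' : t < l + ε := by exact_mod_cast h2
        exact ⟨t, h1, by exact_mod_cast (by linarith : t - ε < l)⟩
    have hev1 : ∀ᶠ y in nhds x, f y < (t : EReal) := husc x (t : EReal) hft
    have hev2 : ∀ᶠ y : ↥Ω in approach Ω x, ((t - ε : ℝ) : EReal) < u y :=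
      Filter.eventually_lt_of_lt_liminf htL
    rw [approach, Filter.eventually_comap] at hev2
    obtain ⟨W, hWsub, hWopen, hxW⟩ := mem_nhds_iff.1 ((hev1.and hev2).filter_mono le_rfl)
    refine ⟨W, hWopen, hxW, fun y hy a ha => ?_⟩
    obtain ⟨h1, h2⟩ := hWsub hy
    have h3 : ((t - ε : ℝ) : EReal) < u a := h2 a ha
    have h4 : (t : EReal) ≤ u a + (ε : EReal) := by
      calc (t : EReal) = ((t - ε : ℝ) : EReal) + (ε : EReal) := by norm_cast; ring
        _ ≤ u a + (ε : EReal) := add_le_add_left h3.le _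
    subst ha
    exact h1.le.trans h4
  choose! V hVopen hVmem hVle using key
  have hcomp : IsCompact Ωᶜ := hopen.isClosed_compl.isCompact
  obtain ⟨t, htsub, htcov⟩ := hcomp.elim_nhds_subcover V
    (fun x hx => (hVopen x hx).mem_nhds (hVmem x hx))
  refine ⟨(⋃ x ∈ t, V x)ᶜ, ?_, ?_, ?_⟩
  · exact (isOpen_biUnion fun x hx => hVopen x (htsub x hx)).isClosed_compl.isCompact
  · intro y hy
    by_contra hyΩ
    exact hy (htcov hyΩ)
  · intro a ha
    simp only [mem_compl_iff, not_not] at ha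
    obtain ⟨x, hxt, hax⟩ := mem_iUnion₂.1 ha
    exact hVle x (htsub x hxt) (a : X) hax a rfl
lemma my_lsc_neg {X : Type*} [TopologicalSpace X] {f : X → EReal}
    (husc : UpperSemicontinuous f) : LowerSemicontinuous (fun x => - f x) := by
  intro x b hb
  have h1 : f x < -b := EReal.lt_neg_of_lt_neg hb
  filter_upwards [husc x _ h1] with y hy using EReal.lt_neg_of_lt_neg hy

/-- let `Ω` be a bounded domain with compactification `X = Ω̄¹` and
let `f : Ω̄¹ → ℝ̄` be upper semicontinuous.  Then `lW(f|_Ω) ≤ lP_{Ω¹}(f|_{∂¹Ω})` and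
`lZ(f|_Ω) ≤ lS_{Ω¹}(f|_{∂¹Ω})`.  If moreover `f < ∞` on `∂¹Ω`, then also
`uW(f|_Ω) ≤ uP_{Ω¹}(f|_{∂¹Ω})` and `uZ(f|_Ω) ≤ uS_{Ω¹}(f|_{∂¹Ω})`.  Here `SH` is
the (translation-invariant) class of superharmonic functions and the Sobolev
versions restrict the classes to the (translation-invariant) Dirichlet space `Dp`. -/
theorem stmt_17 {X : Type*} [TopologicalSpace X] [CompactSpace X] [T2Space X]
    (Ω : Set X) (hopen : IsOpen Ω) (hdense : Dense Ω) (hne : Ω.Nonempty)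
    (SH Dp : (↥Ω → EReal) → Prop)
    (hshiftSH : ∀ (u : ↥Ω → EReal) (c : ℝ), SH u → SH (fun y => u y + (c : EReal)))
    (hshiftDp : ∀ (u : ↥Ω → EReal) (c : ℝ), Dp u → Dp (fun y => u y + (c : EReal)))
    (f : X → EReal) (husc : UpperSemicontinuous f) :
    (∀ z, lW Ω SH (fun y : ↥Ω => f y) z ≤
        lP Ω SH (fun x : {x : X // x ∉ Ω} => f x) z) ∧
    (∀ z, lW Ω (fun u => SH u ∧ Dp u) (fun y : ↥Ω => f y) z ≤
        lP Ω (fun u => SH u ∧ Dp u) (fun x : {x : X // x ∉ Ω} => f x) z) ∧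
    ((∀ x : X, x ∉ Ω → f x ≠ ⊤) →
      (∀ z, uW Ω SH (fun y : ↥Ω => f y) z ≤
          uP Ω SH (fun x : {x : X // x ∉ Ω} => f x) z) ∧
      (∀ z, uW Ω (fun u => SH u ∧ Dp u) (fun y : ↥Ω => f y) z ≤
          uP Ω (fun u => SH u ∧ Dp u) (fun x : {x : X // x ∉ Ω} => f x) z))  := by
  have hg : LowerSemicontinuous (fun x : X => - f x) := my_lsc_neg husc
  have lower : ∀ SH' : (↥Ω → EReal) → Prop, ∀ z,
      lW Ω SH' (fun y : ↥Ω => f y) z ≤ lP Ω SH' (fun x : {x : X // x ∉ Ω} => f x) z := by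
    intro SH' z
    simp only [lW, lP, uW, uP, EReal.neg_le_neg_iff]
    exact le_iInf₂ fun u hu =>
      iInf₂_le u (my_wiener_subset_perron Ω SH' (fun x => - f x) hg hu)
  have upper : ∀ SH' : (↥Ω → EReal) → Prop,
      (∀ (u : ↥Ω → EReal) (c : ℝ), SH' u → SH' (fun y => u y + (c : EReal))) →
      (∀ x : X, x ∉ Ω → f x ≠ ⊤) → ∀ z,
      uW Ω SH' (fun y : ↥Ω => f y) z ≤ uP Ω SH' (fun x : {x : X // x ∉ Ω} => f x) z := by
    intro SH' hshift hfin z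
    refine le_iInf₂ fun u hu => my_le_of_forall_add_eps fun ε hε => ?_
    exact iInf₂_le _ (my_perron_add_mem_wiener Ω hopen SH' hshift f husc hfin u hu ε hε)
  exact ⟨lower SH, lower _, fun hfin =>
    ⟨upper SH hshiftSH hfin,
     upper _ (fun u c hu => ⟨hshiftSH u c hu.1, hshiftDp u c hu.2⟩) hfin⟩⟩
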